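/- Leibniz rule for the natural discrete wedge product: for every type V and all natural numbers k, l, if α is an alternating combinatorial k-cochain on V and β is an alternating combinatorial l-cochain on V, then d(α ∧ β) = (dα) ∧ β + (−1)^k · α ∧ (dβ) as (k+l+1)-cochains. -/

import Mathlib

/-- A combinatorial `k`-cochain is alternating if permuting the entries of a
tuple multiplies the value by the sign of the permutation. -/
def IsAlternating {V : Type*} {k : ℕ} (α : (Fin (k + 1) → V) → ℝ) : Prop :=
  ∀ (π : Equiv.Perm (Fin (k + 1))) (v : Fin (k + 1) → V),
    α (v ∘ π) = ((Equiv.Perm.sign π : ℤ) : ℝ) * α v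

/-- The combinatorial coboundary of a cochain. -/
noncomputable def coboundary {V : Type*} {k : ℕ}
    (α : (Fin k → V) → ℝ) : (Fin (k + 1) → V) → ℝ :=
  fun v => ∑ i : Fin (k + 1), ((-1 : ℝ) ^ (i : ℕ)) * α (fun j => v (i.succAbove j))

/-- The natural discrete wedge product of a `k`-cochain and an `l`-cochain. -/
noncomputable def wedge {V : Type*} {k l : ℕ}
    (α : (Fin (k + 1) → V) → ℝ) (β : (Fin (l + 1) → V) → ℝ) :
    (Fin (k + l + 1) → V) → ℝ :=
  fun v => ((k + l + 1).factorial : ℝ)⁻¹ *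
    ∑ τ : Equiv.Perm (Fin (k + l + 1)),
      ((Equiv.Perm.sign τ : ℤ) : ℝ) *
        (α (fun i : Fin (k + 1) => v (τ (Fin.castLE (by omega) i))) *
         β (fun j : Fin (l + 1) => v (τ ⟨k + (j : ℕ), by omega⟩)))

noncomputable def cup {V : Type*} {k l : ℕ}
    (α : (Fin (k + 1) → V) → ℝ) (β : (Fin (l + 1) → V) → ℝ) :
    (Fin (k + l + 1) → V) → ℝ :=
  fun w => α (fun i => w (Fin.castLE (by omega) i)) * β (fun j => w ⟨k + (j : ℕ), by omega⟩)

noncomputable def altc {V : Type*} {n : ℕ} (γ : (Fin (n + 1) → V) → ℝ) :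
    (Fin (n + 1) → V) → ℝ :=
  fun v => ((n + 1).factorial : ℝ)⁻¹ *
    ∑ τ : Equiv.Perm (Fin (n + 1)), ((Equiv.Perm.sign τ : ℤ) : ℝ) * γ (v ∘ τ)

lemma wedge_eq_altc_cup {V : Type*} {k l : ℕ}
    (α : (Fin (k + 1) → V) → ℝ) (β : (Fin (l + 1) → V) → ℝ) :
    wedge α β = altc (cup α β) := rfl

open Equiv Equiv.Perm in
lemma key_bij {V : Type*} {n : ℕ} (γ : (Fin (n + 1) → V) → ℝ) (v : Fin (n + 2) → V)
    (j : Fin (n + 2)) :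
    ∑ σ : Equiv.Perm (Fin (n + 2)),
        ((Equiv.Perm.sign σ : ℤ) : ℝ) * ((-1 : ℝ) ^ (j : ℕ) * γ (fun b => v (σ (j.succAbove b))))
      = ∑ p : Fin (n + 2) × Equiv.Perm (Fin (n + 1)),
          ((-1 : ℝ) ^ (p.1 : ℕ)) * (((Equiv.Perm.sign p.2 : ℤ) : ℝ) *
            γ (fun b => v (p.1.succAbove (p.2 b)))) := by
  classical
  set f : Fin (n + 2) × Equiv.Perm (Fin (n + 1)) → Equiv.Perm (Fin (n + 2)) :=
    fun p => (Fin.cycleRange p.1)⁻¹ * Equiv.Perm.decomposeFin.symm (0, p.2) * Fin.cycleRange j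
    with hf
  have hext0 : ∀ τ : Equiv.Perm (Fin (n + 1)), Equiv.Perm.decomposeFin.symm (0, τ) 0 = 0 :=
    fun τ => Equiv.Perm.decomposeFin_symm_apply_zero 0 τ
  have hexts : ∀ (τ : Equiv.Perm (Fin (n + 1))) (x : Fin (n + 1)),
      Equiv.Perm.decomposeFin.symm (0, τ) x.succ = (τ x).succ := by
    intro τ x
    rw [Equiv.Perm.decomposeFin_symm_apply_succ]
    simp
  have hcr0 : ∀ i : Fin (n + 2), (Fin.cycleRange i)⁻¹ 0 = i := by
    intro i
    have := Fin.cycleRange_self i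
    exact (Equiv.Perm.eq_inv_iff_eq.mpr this).symm
  have hbij : Function.Bijective f := by
    rw [Fintype.bijective_iff_injective_and_card]
    constructor
    · intro p q hpq
      have h1 : (Fin.cycleRange p.1)⁻¹ * Equiv.Perm.decomposeFin.symm (0, p.2)
          = (Fin.cycleRange q.1)⁻¹ * Equiv.Perm.decomposeFin.symm (0, q.2) := by
        have := mul_right_cancel hpq
        exact this
      have hi : p.1 = q.1 := by
        have := congrArg (fun σ : Equiv.Perm (Fin (n + 2)) => σ 0) h1
        simpa [Equiv.Perm.mul_apply, hext0, hcr0] using this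
      have hτ : p.2 = q.2 := by
        rw [hi] at h1
        have h2 := mul_left_cancel h1
        have h3 : ∀ x, p.2 x = q.2 x := by
          intro x
          have := congrArg (fun σ : Equiv.Perm (Fin (n + 2)) => σ x.succ) h2
          simpa [hexts] using this
        exact Equiv.ext h3
      exact Prod.ext hi hτ
    · simp [Fintype.card_perm, Nat.factorial_succ]
  refine (Fintype.sum_bijective f hbij _ _ ?_).symm
  rintro ⟨i, τ⟩
  have happ : ∀ b : Fin (n + 1), (f (i, τ)) (j.succAbove b) = i.succAbove (τ b) := by
    intro b
    simp only [hf, Equiv.Perm.mul_apply, Fin.cycleRange_succAbove, hexts]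
    rw [← Fin.cycleRange_succAbove i (τ b), Equiv.Perm.inv_def, Equiv.symm_apply_apply]
  have hsign : ((Equiv.Perm.sign (f (i, τ)) : ℤ) : ℝ)
      = (-1 : ℝ) ^ (i : ℕ) * ((Equiv.Perm.sign τ : ℤ) : ℝ) * (-1 : ℝ) ^ (j : ℕ) := by
    simp only [hf, map_mul, map_inv, Fin.sign_cycleRange,
      Equiv.Perm.decomposeFin.symm_sign, if_pos rfl]
    have h1 : ((-1 : ℤˣ) ^ (i : ℕ))⁻¹ = (-1 : ℤˣ) ^ (i : ℕ) := by
      rw [← inv_pow, inv_eq_of_mul_eq_one_right (by simp : (-1 : ℤˣ) * (-1) = 1)]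
    rw [h1]
    push_cast
    ring
  simp only [happ, hsign]
  have hj : ((-1:ℝ) ^ (j:ℕ)) * ((-1:ℝ) ^ (j:ℕ)) = 1 := by
    rw [← pow_add, ← two_mul, pow_mul]
    norm_num
  linear_combination (-((-1:ℝ) ^ (i:ℕ) * ((Equiv.Perm.sign τ : ℤ) : ℝ) *
    γ (fun b => v (i.succAbove (τ b))))) * hj

lemma coboundary_altc {V : Type*} {n : ℕ} (γ : (Fin (n + 1) → V) → ℝ) :
    coboundary (altc γ) = altc (coboundary γ) := by
  funext v
  simp only [coboundary, altc, Function.comp_def]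
  have key : ∀ j : Fin (n + 2),
      ∑ σ : Equiv.Perm (Fin (n + 2)), ((Equiv.Perm.sign σ : ℤ) : ℝ) *
          ((-1 : ℝ) ^ (j : ℕ) * γ (fun b => v (σ (j.succAbove b))))
        = ∑ p : Fin (n + 2) × Equiv.Perm (Fin (n + 1)),
            ((-1 : ℝ) ^ (p.1 : ℕ)) * (((Equiv.Perm.sign p.2 : ℤ) : ℝ) *
              γ (fun b => v (p.1.succAbove (p.2 b)))) := fun j => key_bij γ v j
  have e1 : (∑ i : Fin (n + 1 + 1), (-1 : ℝ) ^ (i : ℕ) *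
        (((n + 1).factorial : ℝ)⁻¹ * ∑ τ : Equiv.Perm (Fin (n + 1)),
          ((Equiv.Perm.sign τ : ℤ) : ℝ) * γ (fun b => v (i.succAbove (τ b)))))
      = ((n + 1).factorial : ℝ)⁻¹ *
          ∑ p : Fin (n + 2) × Equiv.Perm (Fin (n + 1)),
            ((-1 : ℝ) ^ (p.1 : ℕ)) * (((Equiv.Perm.sign p.2 : ℤ) : ℝ) *
              γ (fun b => v (p.1.succAbove (p.2 b)))) := by
    rw [Fintype.sum_prod_type]
    simp only [Finset.mul_sum]
    refine Finset.sum_congr rfl fun i _ => ?_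
    exact Finset.sum_congr rfl fun τ _ => by ring
  rw [e1]
  have e2 : (∑ τ : Equiv.Perm (Fin (n + 1 + 1)), ((Equiv.Perm.sign τ : ℤ) : ℝ) *
        ∑ i : Fin (n + 1 + 1), (-1 : ℝ) ^ (i : ℕ) * γ (fun b => v (τ (i.succAbove b))))
      = (n + 2 : ℝ) * ∑ p : Fin (n + 2) × Equiv.Perm (Fin (n + 1)),
            ((-1 : ℝ) ^ (p.1 : ℕ)) * (((Equiv.Perm.sign p.2 : ℤ) : ℝ) *
              γ (fun b => v (p.1.succAbove (p.2 b)))) := by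
    simp only [Finset.mul_sum]
    rw [Finset.sum_comm]
    rw [Finset.sum_congr rfl fun j _ => key j]
    rw [Finset.sum_const, Finset.card_univ, Fintype.card_fin, nsmul_eq_mul]
    push_cast
    exact Finset.mul_sum _ _ _
  rw [e2]
  rw [← mul_assoc]
  congr 1
  have h2 : ((n : ℝ) + 2) ≠ 0 := by positivity
  have hfac : ((n + 1 + 1).factorial : ℝ) = ((n : ℝ) + 2) * ((n + 1).factorial : ℝ) := by
    rw [Nat.factorial_succ (n + 1)]
    push_cast
    ring
  rw [hfac, mul_inv, mul_comm (((n : ℝ) + 2)⁻¹), mul_assoc, inv_mul_cancel₀ h2, mul_one]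

lemma altc_add {V : Type*} {n : ℕ} (f g : (Fin (n + 1) → V) → ℝ) (v : Fin (n + 1) → V) :
    altc (fun w => f w + g w) v = altc f v + altc g v := by
  simp only [altc]
  rw [← mul_add, ← Finset.sum_add_distrib]
  congr 1
  exact Finset.sum_congr rfl fun τ _ => by ring

lemma altc_smul {V : Type*} {n : ℕ} (c : ℝ) (f : (Fin (n + 1) → V) → ℝ) (v : Fin (n + 1) → V) :
    altc (fun w => c * f w) v = c * altc f v := by
  simp only [altc, Finset.mul_sum]
  exact Finset.sum_congr rfl fun τ _ => by ring

lemma altc_precast {V : Type*} {m m' : ℕ} (h : m' + 1 = m + 1) (γ : (Fin (m' + 1) → V) → ℝ)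
    (v : Fin (m + 1) → V) :
    altc (fun w => γ (fun i => w (Fin.cast h i))) v = altc γ (fun i => v (Fin.cast h i)) := by
  have hm : m' = m := by omega
  subst hm
  have hc : ∀ i : Fin (m' + 1), Fin.cast h i = i := fun i => rfl
  simp only [hc]

lemma coboundary_cup {V : Type*} {k l : ℕ} (α : (Fin (k + 1) → V) → ℝ)
    (β : (Fin (l + 1) → V) → ℝ) (v : Fin (k + l + 1 + 1) → V) :
    coboundary (cup α β) v
      = cup (coboundary α) β
          (fun i => v (Fin.cast (congrArg (· + 1) (Nat.add_right_comm k 1 l)) i))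
        + (-1 : ℝ) ^ k * cup α (coboundary β) v := by
  have h : k + 1 + l + 1 = k + l + 1 + 1 := by omega
  have hsum : k + 1 + (l + 1) = k + l + 1 + 1 := by omega
  simp only [coboundary, cup]
  rw [Fin.sum_univ_castSucc (n := k + 1)]
  rw [Fin.sum_univ_succ (n := l + 1)]
  have hL : (∑ x : Fin (k + l + 1 + 1), (-1 : ℝ) ^ (x : ℕ) *
        ((α fun a => v (x.succAbove (Fin.castLE (by omega) a))) *
          β fun b => v (x.succAbove ⟨k + (b : ℕ), by omega⟩)))
      = (∑ x : Fin (k + 1 + (l + 1)), (-1 : ℝ) ^ ((Fin.cast hsum x) : ℕ) *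
          ((α fun a => v ((Fin.cast hsum x).succAbove (Fin.castLE (by omega) a))) *
            β fun b => v ((Fin.cast hsum x).succAbove ⟨k + (b : ℕ), by omega⟩))) :=
    (Fintype.sum_equiv (finCongr hsum) _ _ (fun x => rfl)).symm
  rw [hL, Fin.sum_univ_add]
  clear hL
  have hA : (∑ i : Fin (k + 1), (-1 : ℝ) ^ ((Fin.cast hsum (Fin.castAdd (l + 1) i)) : ℕ) *
          ((α fun a => v ((Fin.cast hsum (Fin.castAdd (l + 1) i)).succAbove
              (Fin.castLE (by omega) a))) *
            β fun b => v ((Fin.cast hsum (Fin.castAdd (l + 1) i)).succAbove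
              ⟨k + (b : ℕ), by omega⟩)))
      = (∑ i : Fin (k + 1), (-1 : ℝ) ^ ((i.castSucc : Fin (k + 1 + 1)) : ℕ) *
            α fun a => v (Fin.cast h (Fin.castLE (by omega) (i.castSucc.succAbove a))))
          * β fun b => v (Fin.cast h ⟨k + 1 + (b : ℕ), by omega⟩) := by
    rw [Finset.sum_mul]
    refine Finset.sum_congr rfl fun i _ => ?_
    have hX : (fun a : Fin (k + 1) => v ((Fin.cast hsum (Fin.castAdd (l + 1) i)).succAbove
          (Fin.castLE (by omega) a)))
        = fun a : Fin (k + 1) => v (Fin.cast h (Fin.castLE (by omega)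
            (i.castSucc.succAbove a))) := by
      refine funext fun a => congrArg v ?_
      ext
      simp only [Fin.succAbove, Fin.coe_cast, Fin.coe_castAdd, Fin.coe_castSucc,
        Fin.coe_castLE, Fin.lt_def, apply_ite Fin.val, Fin.val_succ] <;>
        first
          | omega
          | (split_ifs <;> omega)
    have hY : (fun b : Fin (l + 1) => v ((Fin.cast hsum (Fin.castAdd (l + 1) i)).succAbove
          ⟨k + (b : ℕ), by omega⟩))
        = fun b : Fin (l + 1) => v (Fin.cast h ⟨k + 1 + (b : ℕ), by omega⟩) := by
      refine funext fun b => congrArg v ?_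
      have hik : (i : ℕ) < k + 1 := i.isLt
      ext
      simp only [Fin.succAbove, Fin.coe_cast, Fin.coe_castAdd, Fin.lt_def,
        apply_ite Fin.val, Fin.val_succ, Fin.coe_castSucc] <;>
        first
          | omega
          | (split_ifs <;> omega)
    rw [hX, hY]
    have hv : ((Fin.cast hsum (Fin.castAdd (l + 1) i)) : ℕ) = ((i.castSucc : Fin (k + 1 + 1)) : ℕ) := by
      simp
    rw [hv]
    ring
  rw [hA]
  clear hA
  have hB : (∑ j : Fin (l + 1), (-1 : ℝ) ^ ((Fin.cast hsum (Fin.natAdd (k + 1) j)) : ℕ) *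
          ((α fun a => v ((Fin.cast hsum (Fin.natAdd (k + 1) j)).succAbove
              (Fin.castLE (by omega) a))) *
            β fun b => v ((Fin.cast hsum (Fin.natAdd (k + 1) j)).succAbove
              ⟨k + (b : ℕ), by omega⟩)))
      = (-1 : ℝ) ^ k * ((α fun a => v (Fin.castLE (by omega) a)) *
          ∑ j : Fin (l + 1), (-1 : ℝ) ^ ((j.succ : Fin (l + 1 + 1)) : ℕ) *
            β fun b => v ⟨k + ((j.succ.succAbove b : Fin (l + 1 + 1)) : ℕ), by omega⟩) := by
    rw [Finset.mul_sum, Finset.mul_sum]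
    refine Finset.sum_congr rfl fun j _ => ?_
    have hX : (fun a : Fin (k + 1) => v ((Fin.cast hsum (Fin.natAdd (k + 1) j)).succAbove
          (Fin.castLE (by omega) a)))
        = fun a : Fin (k + 1) => v (Fin.castLE (by omega) a) := by
      refine funext fun a => congrArg v ?_
      have hak : (a : ℕ) < k + 1 := a.isLt
      ext
      simp only [Fin.succAbove, Fin.coe_cast, Fin.coe_natAdd, Fin.lt_def,
        apply_ite Fin.val, Fin.val_succ, Fin.coe_castSucc, Fin.coe_castLE] <;>
        first
          | omega
          | (split_ifs <;> omega)
    have hY : (fun b : Fin (l + 1) => v ((Fin.cast hsum (Fin.natAdd (k + 1) j)).succAbove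
          ⟨k + (b : ℕ), by omega⟩))
        = fun b : Fin (l + 1) => v ⟨k + ((j.succ.succAbove b : Fin (l + 1 + 1)) : ℕ), by omega⟩ := by
      refine funext fun b => congrArg v ?_
      ext
      simp only [Fin.succAbove, Fin.coe_cast, Fin.coe_natAdd, Fin.lt_def,
        apply_ite Fin.val, Fin.val_succ, Fin.coe_castSucc] <;>
        first
          | omega
          | (split_ifs <;> omega)
    rw [hX, hY]
    have hv : ((Fin.cast hsum (Fin.natAdd (k + 1) j)) : ℕ) = k + 1 + (j : ℕ) := by simp
    rw [hv]
    have : ((j.succ : Fin (l + 1 + 1)) : ℕ) = (j : ℕ) + 1 := rfl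
    rw [this]
    rw [show k + 1 + (j : ℕ) = k + ((j : ℕ) + 1) by omega]
    rw [pow_add]
    ring
  rw [hB]
  clear hB
  have hC : (-1 : ℝ) ^ ((Fin.last (k + 1) : Fin (k + 1 + 1)) : ℕ) *
        (α fun a => v (Fin.cast h (Fin.castLE (by omega) ((Fin.last (k + 1)).succAbove a)))) *
        (β fun b => v (Fin.cast h ⟨k + 1 + (b : ℕ), by omega⟩))
      + (-1 : ℝ) ^ k * ((α fun a => v (Fin.castLE (by omega) a)) *
          ((-1 : ℝ) ^ (((0 : Fin (l + 1 + 1))) : ℕ) *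
            β fun b => v ⟨k + (((0 : Fin (l + 1 + 1)).succAbove b : Fin (l + 1 + 1)) : ℕ), by omega⟩))
      = 0 := by
    have hX : (fun a : Fin (k + 1) => v (Fin.cast h (Fin.castLE (by omega)
          ((Fin.last (k + 1)).succAbove a))))
        = fun a : Fin (k + 1) => v (Fin.castLE (by omega) a) := by
      refine funext fun a => congrArg v ?_
      have hak : (a : ℕ) < k + 1 := a.isLt
      ext
      simp only [Fin.succAbove, Fin.coe_cast, Fin.lt_def, apply_ite Fin.val,
        Fin.val_succ, Fin.coe_castSucc, Fin.coe_castLE, Fin.val_last] <;>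
        first
          | omega
          | (split_ifs <;> omega)
    have hY : (fun b : Fin (l + 1) => v (Fin.cast h ⟨k + 1 + (b : ℕ), by omega⟩))
        = fun b : Fin (l + 1) =>
            v ⟨k + (((0 : Fin (l + 1 + 1)).succAbove b : Fin (l + 1 + 1)) : ℕ), by omega⟩ := by
      refine funext fun b => congrArg v ?_
      ext
      simp only [Fin.succAbove, Fin.coe_cast, Fin.lt_def, apply_ite Fin.val,
        Fin.val_succ, Fin.coe_castSucc, Fin.val_zero] <;>
        first
          | omega
          | (split_ifs <;> omega)
    rw [hX, hY]
    have h1 : ((Fin.last (k + 1) : Fin (k + 1 + 1)) : ℕ) = k + 1 := rfl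
    have h2 : (((0 : Fin (l + 1 + 1))) : ℕ) = 0 := rfl
    rw [h1, h2, pow_succ]
    ring
  linear_combination -hC

/-- Leibniz rule for the natural discrete wedge product:
`d(α ∧ β) = (dα) ∧ β + (−1)ᵏ · α ∧ (dβ)` for alternating cochains. -/
theorem wedge_leibniz {V : Type*} {k l : ℕ}
    (α : (Fin (k + 1) → V) → ℝ) (β : (Fin (l + 1) → V) → ℝ)
    (hα : IsAlternating α) (hβ : IsAlternating β) :
    ∀ v : Fin (k + l + 1 + 1) → V,
      coboundary (wedge α β) v
        = wedge (coboundary α) β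
            (fun i => v (Fin.cast (by omega : k + 1 + l + 1 = k + l + 1 + 1) i))
          + ((-1 : ℝ) ^ k) * wedge α (coboundary β) v := by
  intro v
  have h : k + 1 + l + 1 = k + l + 1 + 1 := by omega
  rw [wedge_eq_altc_cup α β, coboundary_altc]
  have hc : coboundary (cup α β) = fun w =>
      cup (coboundary α) β (fun i => w (Fin.cast h i))
        + (-1 : ℝ) ^ k * cup α (coboundary β) w :=
    funext fun w => coboundary_cup α β w
  rw [hc]
  refine (altc_add _ _ _).trans ?_
  refine congrArg₂ (· + ·) ?_ ?_
  · exact (altc_precast h (cup (coboundary α) β) v).trans rfl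
  · exact (altc_smul _ _ _).trans rfl
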